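/- For all integers ℓ ≥ 1 and all k with 7 ≤ k ≤ ⌊3ℓ/2⌋ - 7, the coefficients of binom{ℓ+3}{3}_q satisfy p_{k+1}(ℓ,3) - p_k(ℓ,3) ≥ 2, with no exceptions. -/

import Mathlib

open PowerSeries Finset

/-- `rn n` = number of ways to write `n = 2a+3b`. -/
def rn (n : ℕ) : ℕ := n / 6 + if n % 6 = 1 then 0 else 1

noncomputable def Hs : PowerSeries ℚ := PowerSeries.mk fun n => (rn n : ℚ)

lemma Hs_mul_E : Hs * ((1 - (X : PowerSeries ℚ)^2) * (1 - X^3)) = 1 := by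
  have hE : Hs * ((1 - (X : PowerSeries ℚ)^2) * (1 - X^3))
      = Hs - Hs * X^2 - Hs * X^3 + Hs * X^5 := by ring
  rw [hE]
  ext n
  simp only [map_add, map_sub, coeff_mul_X_pow', Hs, coeff_mk, coeff_one]
  split_ifs <;>
  first
  | (exfalso; omega)
  | (have e : rn n + rn (n-5) = rn (n-2) + rn (n-3) := by unfold rn; split_ifs <;> omega
     have e' : ((rn n : ℚ)) + rn (n-5) = rn (n-2) + rn (n-3) := by exact_mod_cast e
     linarith)
  | (have e : rn n = rn (n-2) + rn (n-3) := by unfold rn; split_ifs <;> omega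
     have e' : ((rn n : ℚ)) = rn (n-2) + rn (n-3) := by exact_mod_cast e
     linarith)
  | (have e : rn n = rn (n-2) := by unfold rn; split_ifs <;> omega
     have e' : ((rn n : ℚ)) = rn (n-2) := by exact_mod_cast e
     linarith)
  | (have h0 : n = 0 := by omega
     subst h0; norm_num [rn])
  | (have h0 : n = 1 := by omega
     subst h0; norm_num [rn])

lemma key (ℓ : ℕ) :
    (1 - (X : PowerSeries ℚ)) *
      ((∏ i ∈ Finset.range 3, (1 - (PowerSeries.X : PowerSeries ℚ) ^ (ℓ + i + 1))) *
       (∏ i ∈ Finset.range 3, (1 - (PowerSeries.X : PowerSeries ℚ) ^ (i + 1)))⁻¹)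
    = (∏ i ∈ Finset.range 3, (1 - (PowerSeries.X : PowerSeries ℚ) ^ (ℓ + i + 1))) * Hs := by
  set N := ∏ i ∈ Finset.range 3, (1 - (PowerSeries.X : PowerSeries ℚ) ^ (ℓ + i + 1)) with hN
  set D := ∏ i ∈ Finset.range 3, (1 - (PowerSeries.X : PowerSeries ℚ) ^ (i + 1)) with hD
  have hDe : D = (1 - X) * ((1 - X^2) * (1 - X^3)) := by
    rw [hD]
    simp [Finset.prod_range_succ]
    ring
  have hDc : constantCoeff D ≠ 0 := by
    rw [hDe]
    simp
  have hDi : D * D⁻¹ = 1 := PowerSeries.mul_inv_cancel _ hDc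
  have hEne : ((1 : PowerSeries ℚ) - X^2) * (1 - X^3) ≠ 0 := by
    intro h
    have h1 := Hs_mul_E
    rw [h, mul_zero] at h1
    exact zero_ne_one h1
  apply mul_right_cancel₀ hEne
  calc (1 - (X : PowerSeries ℚ)) * (N * D⁻¹) * ((1 - X^2) * (1 - X^3))
      = N * (D * D⁻¹) := by rw [hDe]; ring
    _ = N := by rw [hDi, mul_one]
    _ = N * (Hs * ((1 - X^2) * (1 - X^3))) := by rw [Hs_mul_E, mul_one]
    _ = N * Hs * ((1 - X^2) * (1 - X^3)) := by ring

/-- The coefficient of `q^k` in the Gaussian polynomial (q-binomial coefficient)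
`binom{ℓ+m}{m}_q = ∏_{i=1}^m (1-q^(ℓ+i))/(1-q^i)`, computed in `ℚ⟦q⟧`. -/
noncomputable def gaussCoeff (ℓ m k : ℕ) : ℚ :=
  PowerSeries.coeff k
    ((∏ i ∈ Finset.range m, (1 - (PowerSeries.X : PowerSeries ℚ) ^ (ℓ + i + 1))) *
     (∏ i ∈ Finset.range m, (1 - (PowerSeries.X : PowerSeries ℚ) ^ (i + 1)))⁻¹)

theorem two_strict_m3 (ℓ : ℕ) (hℓ : 1 ≤ ℓ) (k : ℕ) (h1 : 7 ≤ k)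
    (h2 : k ≤ 3 * ℓ / 2 - 7) :
    gaussCoeff ℓ 3 (k + 1) - gaussCoeff ℓ 3 k ≥ 2 := by
  have hl : 10 ≤ ℓ := by omega
  have hco : gaussCoeff ℓ 3 (k+1) - gaussCoeff ℓ 3 k
      = (coeff (k+1)) ((∏ i ∈ Finset.range 3,
          (1 - (PowerSeries.X : PowerSeries ℚ) ^ (ℓ + i + 1))) * Hs) := by
    rw [← key ℓ]
    unfold gaussCoeff
    rw [sub_mul, one_mul, map_sub, coeff_succ_X_mul]
  rw [hco]
  have hNexp : (∏ i ∈ Finset.range 3,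
        (1 - (PowerSeries.X : PowerSeries ℚ) ^ (ℓ + i + 1))) * Hs
      = Hs - Hs * X^(ℓ+1) - Hs * X^(ℓ+2) - Hs * X^(ℓ+3)
        + Hs * X^(2*ℓ+3) + Hs * X^(2*ℓ+4) + Hs * X^(2*ℓ+5) - Hs * X^(3*ℓ+6) := by
    simp [Finset.prod_range_succ]
    ring
  rw [hNexp]
  simp only [map_add, map_sub, coeff_mul_X_pow', Hs, coeff_mk]
  have hb1 : ¬ (2*ℓ+3 ≤ k+1) := by omega
  have hb2 : ¬ (2*ℓ+4 ≤ k+1) := by omega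
  have hb3 : ¬ (2*ℓ+5 ≤ k+1) := by omega
  have hb4 : ¬ (3*ℓ+6 ≤ k+1) := by omega
  rw [if_neg hb1, if_neg hb2, if_neg hb3, if_neg hb4]
  have p1 : (0:ℚ) ≤ (rn (k+1-(ℓ+1)) : ℚ) := Nat.cast_nonneg _
  have p2 : (0:ℚ) ≤ (rn (k+1-(ℓ+2)) : ℚ) := Nat.cast_nonneg _
  have p3 : (0:ℚ) ≤ (rn (k+1-(ℓ+3)) : ℚ) := Nat.cast_nonneg _
  split_ifs with ha hb hc <;>
  first
  | (exfalso; omega)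
  | (have e : 2 + rn (k+1-(ℓ+1)) + rn (k+1-(ℓ+2)) + rn (k+1-(ℓ+3)) ≤ rn (k+1) := by
       unfold rn; split_ifs <;> omega
     have e' : (2:ℚ) + rn (k+1-(ℓ+1)) + rn (k+1-(ℓ+2)) + rn (k+1-(ℓ+3)) ≤ rn (k+1) := by
       exact_mod_cast e
     linarith)
  | (have e : 2 + rn (k+1-(ℓ+1)) + rn (k+1-(ℓ+2)) ≤ rn (k+1) := by
       unfold rn; split_ifs <;> omega
     have e' : (2:ℚ) + rn (k+1-(ℓ+1)) + rn (k+1-(ℓ+2)) ≤ rn (k+1) := by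
       exact_mod_cast e
     linarith)
  | (have e : 2 + rn (k+1-(ℓ+1)) ≤ rn (k+1) := by
       unfold rn; split_ifs <;> omega
     have e' : (2:ℚ) + rn (k+1-(ℓ+1)) ≤ rn (k+1) := by
       exact_mod_cast e
     linarith)
  | (have e : 2 ≤ rn (k+1) := by
       unfold rn; split_ifs <;> omega
     have e' : (2:ℚ) ≤ rn (k+1) := by exact_mod_cast e
     linarith)
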